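/- Let P : [0, ∞) → [0, ∞) be bounded and Riemann integrable on every bounded interval with limsup_{t→∞} P(t)/t = 0, and fix r_0 > 0. Then there exists a decreasing function d : (r_0, ∞) → [0, ∞) with lim_{R→∞} d(R) = 0 such that ∫_r^R P(t)/t² dt ≤ d(R) · ln(R/r) for all r_0 ≤ r < R < ∞. -/

import Mathlib

open Real Set Filter MeasureTheory intervalIntegral

/-- For `P ≥ 0` bounded and integrable on bounded intervals with
`limsup_{t→∞} P(t)/t = 0`, and `r₀ > 0`, there is a decreasing function
`d : (r₀, ∞) → [0, ∞)` with `d(R) → 0` such that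
`∫_r^R P(t)/t² dt ≤ d(R) ln(R/r)` for all `r₀ ≤ r < R`. -/
theorem stmt8 (P : ℝ → ℝ) (hpos : ∀ t : ℝ, 0 ≤ t → 0 ≤ P t)
    (hbdd : ∀ b : ℝ, 0 < b → ∃ Cb : ℝ, ∀ t ∈ Set.Icc (0:ℝ) b, P t ≤ Cb)
    (hInt : ∀ b : ℝ, IntervalIntegrable P volume 0 b)
    (hlimsup : Filter.limsup (fun t : ℝ => ((P t / t : ℝ) : EReal))
        Filter.atTop = 0)
    (r₀ : ℝ) (hr₀ : 0 < r₀) :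
    ∃ d : ℝ → ℝ, AntitoneOn d (Set.Ioi r₀) ∧ (∀ R : ℝ, r₀ < R → 0 ≤ d R) ∧
      Filter.Tendsto d Filter.atTop (nhds 0) ∧
      ∀ r R : ℝ, r₀ ≤ r → r < R →
        (∫ t in r..R, P t / t ^ 2) ≤ d R * Real.log (R / r) := by
  classical
  -- smallness of P t / t
  have hsmall : ∀ ε : ℝ, 0 < ε → ∃ T : ℝ, r₀ ≤ T ∧ ∀ s, T ≤ s → P s / s ≤ ε := by
    intro ε hε
    have h1 : Filter.limsup (fun t : ℝ => ((P t / t : ℝ) : EReal)) Filter.atTop < (ε : EReal) := by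
      rw [hlimsup]; exact_mod_cast hε
    have h2 := Filter.eventually_lt_of_limsup_lt h1
    rw [eventually_atTop] at h2
    obtain ⟨T', hT'⟩ := h2
    refine ⟨max T' r₀, le_max_right _ _, fun s hs => ?_⟩
    have := hT' s (le_trans (le_max_left _ _) hs)
    exact_mod_cast this.le
  -- global bound for P s / s on [r₀, ∞)
  obtain ⟨T₁, hT₁r₀, hT₁⟩ := hsmall 1 one_pos
  obtain ⟨C, hC⟩ := hbdd T₁ (lt_of_lt_of_le hr₀ hT₁r₀)
  have hC0 : 0 ≤ C := le_trans (hpos 0 le_rfl) (hC 0 ⟨le_rfl, le_of_lt (lt_of_lt_of_le hr₀ hT₁r₀)⟩)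
  set M : ℝ := max (C / r₀) 1 with hMdef
  have hQM : ∀ s : ℝ, r₀ ≤ s → P s / s ≤ M := by
    intro s hs
    rcases le_or_gt s T₁ with h | h
    · refine le_trans ?_ (le_max_left _ _)
      exact div_le_div₀ hC0 (hC s ⟨le_trans hr₀.le hs, h⟩) hr₀ hs
    · exact le_trans (hT₁ s h.le) (le_max_right _ _)
  -- the decreasing majorant p
  set p : ℝ → ℝ := fun t => sSup ((fun s => P s / s) '' Ici t) with hpdef
  have hBdd : ∀ t : ℝ, r₀ ≤ t → BddAbove ((fun s => P s / s) '' Ici t) := by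
    intro t ht
    exact ⟨M, fun x ⟨s, hs, hx⟩ => hx ▸ hQM s (le_trans ht hs)⟩
  have hne : ∀ t : ℝ, ((fun s => P s / s) '' Ici t).Nonempty :=
    fun t => ⟨P t / t, t, Set.self_mem_Ici, rfl⟩
  have hpQ : ∀ t : ℝ, r₀ ≤ t → P t / t ≤ p t :=
    fun t ht => le_csSup (hBdd t ht) ⟨t, Set.self_mem_Ici, rfl⟩
  have hp0 : ∀ t : ℝ, r₀ ≤ t → 0 ≤ p t := by
    intro t ht
    exact le_trans (div_nonneg (hpos t (le_trans hr₀.le ht)) (le_trans hr₀.le ht)) (hpQ t ht)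
  have hpanti : ∀ t₁ t₂ : ℝ, r₀ ≤ t₁ → t₁ ≤ t₂ → p t₂ ≤ p t₁ := by
    intro t₁ t₂ h1 h12
    exact csSup_le_csSup (hBdd t₁ h1) (hne t₂) (Set.image_mono (Set.Ici_subset_Ici.mpr h12))
  have hpε : ∀ ε : ℝ, 0 < ε → ∃ T : ℝ, r₀ ≤ T ∧ ∀ t, T ≤ t → p t ≤ ε := by
    intro ε hε
    obtain ⟨T, hTr₀, hT⟩ := hsmall ε hε
    exact ⟨T, hTr₀, fun t ht => csSup_le (hne t) (fun x ⟨s, hs, hx⟩ => hx ▸ hT s (le_trans ht hs))⟩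
  -- positivity of points in intervals
  have hpos' : ∀ a b : ℝ, r₀ ≤ a → r₀ ≤ b → (0:ℝ) ∉ Set.uIcc a b := by
    intro a b ha hb h
    have := (Set.mem_uIcc.mp h)
    rcases this with ⟨h1, _⟩ | ⟨h1, _⟩ <;> linarith [hr₀]
  -- integrability of p t / t
  have hpInt : ∀ a b : ℝ, r₀ ≤ a → r₀ ≤ b → IntervalIntegrable (fun t => p t / t) volume a b := by
    intro a b ha hb
    have h1 : AntitoneOn p (Set.uIcc a b) := by
      intro x hx y hy hxy
      have hx' : r₀ ≤ x := le_trans (le_min ha hb) hx.1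
      exact hpanti x y hx' hxy
    have h2 : ContinuousOn (fun t : ℝ => t⁻¹) (Set.uIcc a b) := by
      apply ContinuousOn.inv₀ continuousOn_id
      intro x hx hx0
      exact hpos' a b ha hb (hx0 ▸ hx)
    simpa only [div_eq_mul_inv] using (h1.intervalIntegrable).mul_continuousOn h2
  -- integrability of P t / t ^ 2
  have hPInt : ∀ a b : ℝ, r₀ ≤ a → r₀ ≤ b →
      IntervalIntegrable (fun t => P t / t ^ 2) volume a b := by
    intro a b ha hb
    have h0 : IntervalIntegrable P volume a b := by
      have h1 := hInt (max a b)
      apply h1.mono_set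
      intro x hx
      rcases Set.mem_uIcc.mp hx with ⟨h1, h2⟩ | ⟨h1, h2⟩
      · exact Set.mem_uIcc.mpr (Or.inl ⟨by linarith [le_min ha hb, hr₀], le_trans h2 (le_max_right _ _)⟩)
      · exact Set.mem_uIcc.mpr (Or.inl ⟨by linarith [le_min ha hb, hr₀], le_trans h2 (le_max_left _ _)⟩)
    have h2 : ContinuousOn (fun t : ℝ => (t ^ 2)⁻¹) (Set.uIcc a b) := by
      apply ContinuousOn.inv₀ (continuousOn_pow 2)
      intro x hx hx0
      exact hpos' a b ha hb (by simpa using (pow_eq_zero_iff (n := 2) (by norm_num)).mp hx0 ▸ hx)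
    simpa only [div_eq_mul_inv] using h0.mul_continuousOn h2
  -- comparison
  have hcomp : ∀ r R : ℝ, r₀ ≤ r → r ≤ R →
      (∫ t in r..R, P t / t ^ 2) ≤ ∫ t in r..R, p t / t := by
    intro r R hr hrR
    apply intervalIntegral.integral_mono_on hrR (hPInt r R hr (le_trans hr hrR))
      (hpInt r R hr (le_trans hr hrR))
    intro t ht
    have ht0 : 0 < t := lt_of_lt_of_le hr₀ (le_trans hr ht.1)
    have : P t / t ^ 2 = (P t / t) / t := by
      rw [div_div, ← pow_two]
    rw [this]
    gcongr
    exact hpQ t (le_trans hr ht.1)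
  -- integral of c/t
  have hconstInt : ∀ (c a b : ℝ), r₀ ≤ a → r₀ ≤ b →
      IntervalIntegrable (fun t => c * t⁻¹) volume a b := by
    intro c a b ha hb
    apply ContinuousOn.intervalIntegrable
    exact continuousOn_const.mul (ContinuousOn.inv₀ continuousOn_id
      (fun x hx hx0 => hpos' a b ha hb (hx0 ▸ hx)))
  have hlogint : ∀ a b : ℝ, r₀ ≤ a → r₀ ≤ b → ∀ c : ℝ,
      (∫ t in a..b, c * t⁻¹) = c * Real.log (b / a) := by
    intro a b ha hb c
    rw [intervalIntegral.integral_const_mul, integral_inv (hpos' a b ha hb)]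
  have hup : ∀ c a b : ℝ, r₀ ≤ a → a ≤ b → (∀ t, a ≤ t → t ≤ b → p t ≤ c) →
      (∫ t in a..b, p t / t) ≤ c * Real.log (b / a) := by
    intro c a b ha hab hc
    rw [← hlogint a b ha (le_trans ha hab) c]
    apply intervalIntegral.integral_mono_on hab (hpInt a b ha (le_trans ha hab))
      (hconstInt c a b ha (le_trans ha hab))
    intro t ht
    have ht0 : 0 < t := lt_of_lt_of_le hr₀ (le_trans ha ht.1)
    rw [div_eq_mul_inv]
    exact mul_le_mul_of_nonneg_right (hc t ht.1 ht.2) (inv_nonneg.mpr ht0.le)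
  have hlow : ∀ a b : ℝ, r₀ ≤ a → a ≤ b →
      p b * Real.log (b / a) ≤ ∫ t in a..b, p t / t := by
    intro a b ha hab
    rw [← hlogint a b ha (le_trans ha hab) (p b)]
    apply intervalIntegral.integral_mono_on hab (hconstInt _ a b ha (le_trans ha hab))
      (hpInt a b ha (le_trans ha hab))
    intro t ht
    have ht0 : 0 < t := lt_of_lt_of_le hr₀ (le_trans ha ht.1)
    rw [div_eq_mul_inv]
    exact mul_le_mul_of_nonneg_right (hpanti t b (le_trans ha ht.1) ht.2) (inv_nonneg.mpr ht0.le)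
  have hlog0 : ∀ a b : ℝ, r₀ ≤ a → a ≤ b → 0 ≤ Real.log (b / a) :=
    fun a b ha hab => Real.log_nonneg ((one_le_div (lt_of_lt_of_le hr₀ ha)).mpr hab)
  have hlogsplit : ∀ a b c : ℝ, r₀ ≤ a → r₀ ≤ b → r₀ ≤ c →
      Real.log (c / a) = Real.log (c / b) + Real.log (b / a) := by
    intro a b c ha hb hc
    have ha0 : a ≠ 0 := (lt_of_lt_of_le hr₀ ha).ne'
    have hb0 : b ≠ 0 := (lt_of_lt_of_le hr₀ hb).ne'
    have hc0 : c ≠ 0 := (lt_of_lt_of_le hr₀ hc).ne'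
    rw [Real.log_div hc0 ha0, Real.log_div hc0 hb0, Real.log_div hb0 ha0]; ring
  have key : ∀ A B L ℓ pr : ℝ, 0 ≤ L → 0 ≤ ℓ → B ≤ pr * ℓ → pr * L ≤ A →
      B * L ≤ A * ℓ := by
    intro A B L ℓ pr hL hℓ h1 h2
    nlinarith [mul_le_mul_of_nonneg_right h1 hL, mul_le_mul_of_nonneg_right h2 hℓ]
  have hsplit : ∀ a b c : ℝ, r₀ ≤ a → r₀ ≤ b → r₀ ≤ c →
      (∫ t in a..b, p t / t) + (∫ t in b..c, p t / t) = ∫ t in a..c, p t / t :=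
    fun a b c ha hb hc => intervalIntegral.integral_add_adjacent_intervals
      (hpInt a b ha hb) (hpInt b c hb hc)
  set d : ℝ → ℝ := fun R => (∫ t in r₀..R, p t / t) / Real.log (R / r₀) with hddef
  have hd0 : ∀ R : ℝ, r₀ < R → 0 ≤ d R := by
    intro R hR
    apply div_nonneg _ (hlog0 r₀ R le_rfl hR.le)
    apply intervalIntegral.integral_nonneg hR.le
    intro t ht
    exact div_nonneg (hp0 t ht.1) (le_trans hr₀.le ht.1)
  have hdanti : AntitoneOn d (Set.Ioi r₀) := by
    intro R₁ hR₁ R₂ hR₂ h12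
    rw [Set.mem_Ioi] at hR₁ hR₂
    have hL₁ : 0 < Real.log (R₁ / r₀) := Real.log_pos ((one_lt_div hr₀).mpr hR₁)
    have hL₂ : 0 < Real.log (R₂ / r₀) := Real.log_pos ((one_lt_div hr₀).mpr hR₂)
    rw [hddef]
    simp only
    rw [div_le_div_iff₀ hL₂ hL₁]
    rw [← hsplit r₀ R₁ R₂ le_rfl hR₁.le hR₂.le,
      hlogsplit r₀ R₁ R₂ le_rfl hR₁.le hR₂.le]
    have hB : (∫ t in R₁..R₂, p t / t) ≤ p R₁ * Real.log (R₂ / R₁) :=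
      hup (p R₁) R₁ R₂ hR₁.le h12 (fun t ht _ => hpanti R₁ t hR₁.le ht)
    have hA : p R₁ * Real.log (R₁ / r₀) ≤ ∫ t in r₀..R₁, p t / t :=
      hlow r₀ R₁ le_rfl hR₁.le
    have := key (∫ t in r₀..R₁, p t / t) (∫ t in R₁..R₂, p t / t)
      (Real.log (R₁ / r₀)) (Real.log (R₂ / R₁)) (p R₁)
      (hlog0 r₀ R₁ le_rfl hR₁.le) (hlog0 R₁ R₂ hR₁.le h12) hB hA
    nlinarith [this]
  refine ⟨d, hdanti, hd0, ?_, ?_⟩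
  · -- tendsto 0
    rw [NormedAddCommGroup.tendsto_nhds_zero]
    intro ε hε
    obtain ⟨T, hTr₀, hT⟩ := hpε (ε / 2) (half_pos hε)
    set Cc : ℝ := ∫ t in r₀..T, p t / t with hCcdef
    have hLtend : Tendsto (fun R : ℝ => Real.log (R / r₀)) atTop atTop :=
      Real.tendsto_log_atTop.comp (tendsto_id.atTop_div_const hr₀)
    filter_upwards [eventually_ge_atTop (max T (r₀ + 1)),
      hLtend.eventually_gt_atTop (2 * Cc / ε)] with R hR1 hR2
    have hRT : T ≤ R := le_trans (le_max_left _ _) hR1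
    have hRr₀ : r₀ < R := lt_of_lt_of_le (by linarith) (le_trans (le_max_right _ _) hR1)
    have hL : 0 < Real.log (R / r₀) := Real.log_pos ((one_lt_div hr₀).mpr hRr₀)
    have hB : (∫ t in T..R, p t / t) ≤ (ε / 2) * Real.log (R / T) :=
      hup (ε / 2) T R hTr₀ hRT (fun t ht _ => hT t ht)
    have hlogle : Real.log (R / T) ≤ Real.log (R / r₀) := by
      rw [hlogsplit r₀ T R le_rfl hTr₀ (le_trans hTr₀ hRT)]
      have := hlog0 r₀ T le_rfl hTr₀
      linarith
    have hCc : Cc < (ε / 2) * Real.log (R / r₀) := by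
      have h1 : 2 * Cc / ε < Real.log (R / r₀) := hR2
      rw [div_lt_iff₀ hε] at h1
      linarith
    have hnum : (∫ t in r₀..R, p t / t) < ε * Real.log (R / r₀) := by
      rw [← hsplit r₀ T R le_rfl hTr₀ (le_trans hTr₀ hRT)]
      have h2 : (∫ t in T..R, p t / t) ≤ (ε / 2) * Real.log (R / r₀) :=
        le_trans hB (mul_le_mul_of_nonneg_left hlogle (by linarith))
      calc Cc + (∫ t in T..R, p t / t) < (ε / 2) * Real.log (R / r₀) + (ε / 2) * Real.log (R / r₀) := by
            linarith
        _ = ε * Real.log (R / r₀) := by ring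
    have hdR : d R < ε := by
      rw [hddef]
      simp only
      rw [div_lt_iff₀ hL]
      exact hnum
    rw [Real.norm_eq_abs, abs_of_nonneg (hd0 R hRr₀)]
    exact hdR
  · -- main estimate
    intro r R hr hrR
    have hRr₀ : r₀ < R := lt_of_le_of_lt hr hrR
    have hL : 0 < Real.log (R / r₀) := Real.log_pos ((one_lt_div hr₀).mpr hRr₀)
    refine le_trans (hcomp r R hr hrR.le) ?_
    rw [hddef]
    simp only
    rw [div_mul_eq_mul_div, le_div_iff₀ hL]
    rw [← hsplit r₀ r R le_rfl hr (le_trans hr hrR.le),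
      hlogsplit r₀ r R le_rfl hr (le_trans hr hrR.le)]
    have hB : (∫ t in r..R, p t / t) ≤ p r * Real.log (R / r) :=
      hup (p r) r R hr hrR.le (fun t ht _ => hpanti r t hr ht)
    have hA : p r * Real.log (r / r₀) ≤ ∫ t in r₀..r, p t / t :=
      hlow r₀ r le_rfl hr
    have := key (∫ t in r₀..r, p t / t) (∫ t in r..R, p t / t)
      (Real.log (r / r₀)) (Real.log (R / r)) (p r)
      (hlog0 r₀ r le_rfl hr) (hlog0 r R hr hrR.le) hB hA
    nlinarith [this]
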